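/- Let (X,σ) be an unbalanced magnetic graph and f in the unit ball of Lip_σ(X). Then f is an extreme point of the unit ball of Lip_σ(X) if and only if every connected component of the magnetic graph H_f of σ-satisfied edges of f is unbalanced. -/

import Mathlib

namespace MagneticGraph

variable {V : Type*}

/-- `σ` is a signature on `G`: unimodular on edges and conjugate-symmetric. -/
def IsSignature (G : SimpleGraph V) (σ : V → V → ℂ) : Prop :=
  ∀ u v, G.Adj u v → ‖σ u v‖ = 1 ∧ σ v u = starRingEnd ℂ (σ u v)

/-- Product of the signature along (the darts of) a walk. -/
def sigProd {G : SimpleGraph V} (σ : V → V → ℂ) {u v : V} (w : G.Walk u v) : ℂ :=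
  (w.darts.map fun d => σ d.toProd.1 d.toProd.2).prod

/-- `(X,σ)` is unbalanced: some directed cycle has signature product `≠ 1`. -/
def Unbalanced (G : SimpleGraph V) (σ : V → V → ℂ) : Prop :=
  ∃ (u : V) (w : G.Walk u u), w.IsCycle ∧ sigProd σ w ≠ 1

/-- `(X,σ)` is balanced: every directed cycle has signature product `1`. -/
def Balanced (G : SimpleGraph V) (σ : V → V → ℂ) : Prop :=
  ∀ (u : V) (w : G.Walk u u), w.IsCycle → sigProd σ w = 1

/-- The σ-Lipschitz (semi)norm `max_{u∼v} |f(u) - σ_{uv} f(v)|`. -/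
noncomputable def lipNorm (G : SimpleGraph V) (σ : V → V → ℂ) (f : V → ℂ) : ℝ :=
  sSup {r : ℝ | ∃ u v, G.Adj u v ∧ r = ‖f u - σ u v * f v‖}

/-- The magnetic atom `m^σ_{uv} = δ_u - σ_{uv} δ_v`. -/
def atom [DecidableEq V] (σ : V → V → ℂ) (u v : V) : V → ℂ :=
  fun w => (if w = u then (1 : ℂ) else 0) - σ u v * (if w = v then (1 : ℂ) else 0)

/-- Membership in the magnetic Arens–Eells space: a finite linear combination of atoms. -/
def InAE [DecidableEq V] (G : SimpleGraph V) (σ : V → V → ℂ) (m : V → ℂ) : Prop :=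
  ∃ (n : ℕ) (a : Fin n → ℂ) (p q : Fin n → V),
    (∀ i, G.Adj (p i) (q i)) ∧ m = ∑ i, a i • atom σ (p i) (q i)

/-- The magnetic Arens–Eells norm: infimum of `Σ|aᵢ|` over representations by atoms. -/
noncomputable def aeNorm [DecidableEq V] (G : SimpleGraph V) (σ : V → V → ℂ) (m : V → ℂ) : ℝ :=
  sInf {s : ℝ | ∃ (n : ℕ) (a : Fin n → ℂ) (p q : Fin n → V),
    (∀ i, G.Adj (p i) (q i)) ∧ m = ∑ i, a i • atom σ (p i) (q i) ∧
    s = ∑ i, ‖a i‖}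

/-- `f` is an extreme point of the unit ball of `Lip_σ(X)`. -/
def ExtremePt (G : SimpleGraph V) (σ : V → V → ℂ) (f : V → ℂ) : Prop :=
  lipNorm G σ f ≤ 1 ∧
  ∀ g : V → ℂ, (∀ t : ℝ, t ∈ Set.Icc (-1 : ℝ) 1 → lipNorm G σ (f + t • g) ≤ 1) → g = 0

/-- The graph `H_f` of σ-satisfied edges of `f`. -/
def satGraph (G : SimpleGraph V) (σ : V → V → ℂ) (f : V → ℂ) : SimpleGraph V :=
  SimpleGraph.fromRel fun u v => G.Adj u v ∧ ‖f u - σ u v * f v‖ = 1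

/-- Every connected component of `H` is unbalanced: each vertex can reach an
unbalanced cycle within `H`. -/
def AllComponentsUnbalanced (H : SimpleGraph V) (σ : V → V → ℂ) : Prop :=
  ∀ u : V, ∃ (x : V) (w : H.Walk x x), H.Reachable u x ∧ w.IsCycle ∧ sigProd σ w ≠ 1

/-! ### Auxiliary lemmas -/

open SimpleGraph

@[simp] lemma sigProd_nil {G : SimpleGraph V} (σ : V → V → ℂ) {u : V} :
    sigProd σ (Walk.nil : G.Walk u u) = 1 := rfl

@[simp] lemma sigProd_cons {G : SimpleGraph V} (σ : V → V → ℂ) {u v w : V}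
    (h : G.Adj u v) (p : G.Walk v w) :
    sigProd σ (Walk.cons h p) = σ u v * sigProd σ p := by
  simp [sigProd]

@[simp] lemma sigProd_append {G : SimpleGraph V} (σ : V → V → ℂ) {u v w : V}
    (p : G.Walk u v) (q : G.Walk v w) :
    sigProd σ (p.append q) = sigProd σ p * sigProd σ q := by
  simp [sigProd, Walk.darts_append]

lemma abs_sigProd {G : SimpleGraph V} {σ : V → V → ℂ}
    (hs : ∀ a b, G.Adj a b → ‖σ a b‖ = 1) {u v : V} (w : G.Walk u v) :
    ‖sigProd σ w‖ = 1 := by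
  induction w with
  | nil => simp
  | cons h p ih => simp [norm_mul, hs _ _ h, ih]

lemma sigProd_reverse {G : SimpleGraph V} {σ : V → V → ℂ}
    (hs : ∀ a b, G.Adj a b → σ b a = starRingEnd ℂ (σ a b)) {u v : V} (w : G.Walk u v) :
    sigProd σ w.reverse = starRingEnd ℂ (sigProd σ w) := by
  induction w with
  | nil => simp
  | cons h p ih =>
    rw [Walk.reverse_cons, sigProd_append, ih, sigProd_cons, sigProd_cons, sigProd_nil,
      hs _ _ h, map_mul]
    ring

lemma sigProd_mul_conj {G : SimpleGraph V} {σ : V → V → ℂ}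
    (hs : ∀ a b, G.Adj a b → ‖σ a b‖ = 1) {u v : V} (w : G.Walk u v) :
    sigProd σ w * starRingEnd ℂ (sigProd σ w) = 1 := by
  rw [Complex.mul_conj]
  norm_cast
  rw [Complex.normSq_eq_norm_sq, abs_sigProd hs]
  norm_num

lemma sigma_symm_mul {G : SimpleGraph V} {σ : V → V → ℂ}
    (habs : ∀ a b, G.Adj a b → ‖σ a b‖ = 1)
    (hs : ∀ a b, G.Adj a b → σ b a = starRingEnd ℂ (σ a b))
    {a b : V} (h : G.Adj a b) : σ a b * σ b a = 1 := by
  rw [hs _ _ h, Complex.mul_conj]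
  norm_cast
  rw [Complex.normSq_eq_norm_sq, habs _ _ h]; norm_num

/-- Closed walks in the component of `u` have signature product 1 when all cycles do. -/
lemma closedWalk_sigProd_eq_one {H : SimpleGraph V} {σ : V → V → ℂ}
    (habs : ∀ a b, H.Adj a b → ‖σ a b‖ = 1)
    (hs : ∀ a b, H.Adj a b → σ b a = starRingEnd ℂ (σ a b))
    {u : V}
    (hcyc : ∀ x (w : H.Walk x x), H.Reachable u x → w.IsCycle → sigProd σ w = 1) :
    ∀ (n : ℕ) (x : V) (w : H.Walk x x), w.length ≤ n → H.Reachable u x →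
      sigProd σ w = 1 := by
  classical
  intro n
  induction n with
  | zero =>
    intro x w hl _
    cases w with
    | nil => simp
    | cons h p => simp at hl
  | succ n ih =>
    intro x w hl hr
    cases w with
    | nil => simp
    | cons h p =>
      rename_i y
      have hx : x ∈ p.support := p.end_mem_support
      have hspec := p.take_spec hx
      set q1 := p.takeUntil x hx with hq1def
      set q2 := p.dropUntil x hx with hq2def
      have hlen : q1.length + q2.length = p.length := by
        rw [← hspec, Walk.length_append]
      by_cases hq2 : q2 = Walk.nil
      · have hp1 : p = q1 := by rw [← hspec, hq2, Walk.append_nil]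
        have hcount : p.support.count x = 1 := by
          rw [hp1]; exact p.count_support_takeUntil_eq_one hx
        by_cases hnd : p.support.Nodup
        · have hpath : p.IsPath := (Walk.isPath_def p).mpr hnd
          by_cases hedge : s(x, y) ∈ p.edges
          · cases p with
            | nil => simp at hedge
            | cons h2 t =>
              rename_i y2
              rw [Walk.edges_cons, List.mem_cons] at hedge
              rcases hedge with heq | hmem
              · rw [Sym2.eq_iff] at heq
                have hxy : x ≠ y := h.ne
                have hy2 : y2 = x := by
                  rcases heq with ⟨h1, _⟩ | ⟨h1, _⟩
                  · exact absurd h1 hxy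
                  · exact h1.symm
                subst hy2
                have : t = Walk.nil := (Walk.isPath_iff_eq_nil (p := t)).mp hpath.of_cons
                subst this
                simp only [sigProd_cons, sigProd_nil, mul_one]
                exact sigma_symm_mul habs hs h
              · exfalso
                have hy : y ∈ t.support := Walk.snd_mem_support_of_mem_edges t hmem
                have := hpath.support_nodup
                rw [Walk.support_cons, List.nodup_cons] at this
                exact this.1 hy
          · exact hcyc x (Walk.cons h p) hr ((Walk.cons_isCycle_iff p h).mpr ⟨hpath, hedge⟩)
        · obtain ⟨z, hdup⟩ := List.exists_duplicate_iff_not_nodup.mpr hnd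
          have hz2 : 2 ≤ p.support.count z := List.duplicate_iff_two_le_count.mp hdup
          have hzx : z ≠ x := by rintro rfl; omega
          have hz : z ∈ p.support := hdup.mem
          have hspecz := p.take_spec hz
          set r1 := p.takeUntil z hz with hr1def
          set r2 := p.dropUntil z hz with hr2def
          have hcount1 : r1.support.count z = 1 := p.count_support_takeUntil_eq_one hz
          have hsup : p.support = r1.support ++ r2.support.tail := by
            rw [← hspecz, Walk.support_append]
          have hz2t : z ∈ r2.support.tail := by
            have : p.support.count z = r1.support.count z + r2.support.tail.count z := by
              rw [hsup, List.count_append]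
            by_contra hc
            rw [List.count_eq_zero_of_not_mem hc] at this
            omega
          cases hr2 : r2 with
          | nil => rw [hr2] at hz2t; simp at hz2t
          | cons h2 t =>
            rename_i z2
            rw [hr2] at hz2t
            rw [Walk.support_cons, List.tail_cons] at hz2t
            have hspect := t.take_spec hz2t
            set s1 := t.takeUntil z hz2t with hs1def
            set s2 := t.dropUntil z hz2t with hs2def
            have hw : Walk.cons h p = Walk.cons h (r1.append (Walk.cons h2 (s1.append s2))) := by
              rw [hspect, hr2.symm, hspecz]
            have hlt : s1.length + s2.length = t.length := by
              rw [← hspect, Walk.length_append]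
            have hlr : r1.length + r2.length = p.length := by
              rw [← hspecz, Walk.length_append]
            have hlr2 : r2.length = t.length + 1 := by rw [hr2]; simp
            have hplen : p.length ≤ n := by
              have : (Walk.cons h p).length = p.length + 1 := by simp
              omega
            have hreachz : H.Reachable u z := hr.trans ⟨Walk.cons h r1⟩
            have e1 : sigProd σ (Walk.cons h2 s1 : H.Walk z z) = 1 := by
              apply ih z (Walk.cons h2 s1) ?_ hreachz
              simp only [Walk.length_cons]
              omega
            have e2 : sigProd σ (Walk.cons h (r1.append s2) : H.Walk x x) = 1 := by
              apply ih x _ ?_ hr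
              simp only [Walk.length_cons, Walk.length_append]
              omega
            rw [hw]
            simp only [sigProd_cons, sigProd_append] at e1 e2 ⊢
            calc σ x y * (sigProd σ r1 * (σ z z2 * (sigProd σ s1 * sigProd σ s2)))
                = (σ x y * (sigProd σ r1 * sigProd σ s2)) * (σ z z2 * sigProd σ s1) := by ring
              _ = 1 := by rw [e1, e2, mul_one]
      · have hq2pos : 0 < q2.length := by
          cases hq : q2 with
          | nil => exact absurd hq hq2
          | cons h' t' => simp
        have hw : Walk.cons h p = (Walk.cons h q1).append q2 := by
          rw [← hspec]; rfl
        have hplen : p.length ≤ n := by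
          have : (Walk.cons h p).length = p.length + 1 := by simp
          omega
        have e1 : sigProd σ (Walk.cons h q1 : H.Walk x x) = 1 := by
          apply ih x _ ?_ hr
          simp only [Walk.length_cons]
          omega
        have e2 : sigProd σ q2 = 1 := ih x q2 (by omega) hr
        rw [hw, sigProd_append, e1, e2, mul_one]

lemma sigma_symm_mul' {G : SimpleGraph V} {σ : V → V → ℂ} (hσ : IsSignature G σ)
    {a b : V} (h : G.Adj a b) : σ a b * σ b a = 1 := by
  rw [(hσ a b h).2, Complex.mul_conj]
  norm_cast
  rw [Complex.normSq_eq_norm_sq, (hσ a b h).1]; norm_num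

lemma satGraph_adj {G : SimpleGraph V} {σ : V → V → ℂ} {f : V → ℂ} (hσ : IsSignature G σ)
    {a b : V} (h : (satGraph G σ f).Adj a b) :
    G.Adj a b ∧ ‖f a - σ a b * f b‖ = 1 := by
  rw [satGraph, fromRel_adj] at h
  obtain ⟨-, hrel | hrel⟩ := h
  · exact hrel
  · obtain ⟨hGba, h1⟩ := hrel
    refine ⟨hGba.symm, ?_⟩
    have key : f a - σ a b * f b = -(σ a b * (f b - σ b a * f a)) := by
      have h2 : σ a b * σ b a = 1 := sigma_symm_mul' hσ hGba.symm
      linear_combination (- f a) * h2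
    rw [key, norm_neg, norm_mul, (hσ a b hGba.symm).1, one_mul, h1]

lemma lipSet_bddAbove [Fintype V] (G : SimpleGraph V) (σ : V → V → ℂ) (F : V → ℂ) :
    BddAbove {r : ℝ | ∃ u v, G.Adj u v ∧ r = ‖F u - σ u v * F v‖} := by
  apply Set.Finite.bddAbove
  apply Set.Finite.subset
    (Set.finite_range fun p : V × V => ‖F p.1 - σ p.1 p.2 * F p.2‖)
  rintro r ⟨u, v, -, rfl⟩
  exact ⟨(u, v), rfl⟩

lemma edge_le_lipNorm [Fintype V] {G : SimpleGraph V} {σ : V → V → ℂ} (F : V → ℂ)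
    {a b : V} (h : G.Adj a b) :
    ‖F a - σ a b * F b‖ ≤ lipNorm G σ F :=
  le_csSup (lipSet_bddAbove G σ F) ⟨a, b, h, rfl⟩

lemma lipNorm_le {G : SimpleGraph V} {σ : V → V → ℂ} {F : V → ℂ} {c : ℝ} (hc : 0 ≤ c)
    (h : ∀ a b, G.Adj a b → ‖F a - σ a b * F b‖ ≤ c) :
    lipNorm G σ F ≤ c := by
  apply Real.sSup_le _ hc
  rintro r ⟨a, b, hab, rfl⟩
  exact h a b hab

lemma parallel_walk {H : SimpleGraph V} {σ : V → V → ℂ} {g : V → ℂ}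
    (hpar : ∀ a b, H.Adj a b → g a = σ a b * g b) {a b : V} (w : H.Walk a b) :
    g a = sigProd σ w * g b := by
  induction w with
  | nil => simp
  | cons h p ih =>
    rw [hpar _ _ h, ih, sigProd_cons]
    ring

/-- `f` is an extreme point of the unit ball of `Lip_σ(X)` iff every
connected component of the satisfied graph `H_f` is unbalanced. -/
theorem stmt8 {V : Type*} [Fintype V] (G : SimpleGraph V) (σ : V → V → ℂ)
    (hσ : IsSignature G σ) (hunb : Unbalanced G σ) (f : V → ℂ) (hf : lipNorm G σ f ≤ 1) :
    ExtremePt G σ f ↔ AllComponentsUnbalanced (satGraph G σ f) σ := by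
  classical
  set H := satGraph G σ f with hHdef
  have hHadj : ∀ a b : V, H.Adj a b → G.Adj a b ∧ ‖f a - σ a b * f b‖ = 1 :=
    fun a b h => satGraph_adj hσ h
  have habsH : ∀ a b, H.Adj a b → ‖σ a b‖ = 1 :=
    fun a b h => (hσ a b (hHadj a b h).1).1
  have hsH : ∀ a b, H.Adj a b → σ b a = starRingEnd ℂ (σ a b) :=
    fun a b h => (hσ a b (hHadj a b h).1).2
  constructor
  · -- extreme point → all components unbalanced
    intro hext
    by_contra hnot
    rw [AllComponentsUnbalanced] at hnot
    push_neg at hnot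
    obtain ⟨u, hu⟩ := hnot
    have hone := closedWalk_sigProd_eq_one habsH hsH hu
    set h0 : V → ℂ := fun v =>
      if hv : H.Reachable u v then starRingEnd ℂ (sigProd σ (Classical.choice hv)) else 0
      with hh0
    have habs0 : ∀ v, ‖h0 v‖ ≤ 1 := by
      intro v
      simp only [hh0]
      by_cases hv : H.Reachable u v
      · rw [dif_pos hv, Complex.norm_conj, abs_sigProd habsH]
      · rw [dif_neg hv]; simp
    have hpar : ∀ a b, H.Adj a b → h0 a = σ a b * h0 b := by
      intro a b hab
      by_cases hA : H.Reachable u a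
      · have hB : H.Reachable u b := hA.trans hab.reachable
        simp only [hh0]
        rw [dif_pos hA, dif_pos hB]
        set wa := Classical.choice hA with hwa
        set wb := Classical.choice hB with hwb
        have hc : sigProd σ (wa.append (Walk.cons hab wb.reverse)) = 1 :=
          hone (wa.append (Walk.cons hab wb.reverse)).length u _ le_rfl (Reachable.refl u)
        rw [sigProd_append, sigProd_cons, sigProd_reverse hsH] at hc
        have ha1 : sigProd σ wa * starRingEnd ℂ (sigProd σ wa) = 1 :=
          sigProd_mul_conj habsH wa
        calc starRingEnd ℂ (sigProd σ wa)
            = starRingEnd ℂ (sigProd σ wa) *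
                (sigProd σ wa * (σ a b * starRingEnd ℂ (sigProd σ wb))) := by
              rw [hc, mul_one]
          _ = (sigProd σ wa * starRingEnd ℂ (sigProd σ wa)) *
                (σ a b * starRingEnd ℂ (sigProd σ wb)) := by ring
          _ = σ a b * starRingEnd ℂ (sigProd σ wb) := by rw [ha1, one_mul]
      · have hB : ¬ H.Reachable u b := fun hB => hA (hB.trans hab.symm.reachable)
        simp only [hh0]
        rw [dif_neg hA, dif_neg hB, mul_zero]
    have hne : (Finset.univ : Finset (V × V)).Nonempty := ⟨(u, u), Finset.mem_univ _⟩
    set φ : V × V → ℝ := fun p =>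
      if G.Adj p.1 p.2 ∧ ¬ H.Adj p.1 p.2 then ‖f p.1 - σ p.1 p.2 * f p.2‖ else 0
      with hφ
    set δ : ℝ := Finset.univ.sup' hne φ with hδ
    have hδ0 : 0 ≤ δ := by
      have hle := Finset.le_sup' φ (Finset.mem_univ (u, u))
      have h0' : φ (u, u) = 0 := by
        simp only [hφ]
        rw [if_neg]
        rintro ⟨h, -⟩
        exact G.irrefl h
      rw [h0'] at hle
      exact hle
    have hδ1 : δ < 1 := by
      rw [hδ, Finset.sup'_lt_iff hne]
      intro p _
      simp only [hφ]
      split_ifs with hc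
      · obtain ⟨hG, hnH⟩ := hc
        have hle : ‖f p.1 - σ p.1 p.2 * f p.2‖ ≤ 1 :=
          le_trans (edge_le_lipNorm f hG) hf
        refine lt_of_le_of_ne hle ?_
        intro heq
        apply hnH
        rw [hHdef, satGraph, fromRel_adj]
        exact ⟨hG.ne, Or.inl ⟨hG, heq⟩⟩
      · norm_num
    set ε : ℝ := (1 - δ) / 2 with hε
    have hεpos : 0 < ε := by rw [hε]; linarith
    set g : V → ℂ := fun v => (ε : ℂ) * h0 v with hg
    have hgz : g = 0 := by
      apply hext.2 g
      intro t ht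
      rw [Set.mem_Icc] at ht
      have habs_t : |t| ≤ 1 := abs_le.mpr ⟨ht.1, ht.2⟩
      apply lipNorm_le (by norm_num)
      intro a b hab
      have hrw : (f + t • g) a - σ a b * (f + t • g) b
          = (f a - σ a b * f b) + ((t : ℂ) * (ε : ℂ)) * (h0 a - σ a b * h0 b) := by
        simp only [Pi.add_apply, Pi.smul_apply, hg, Complex.real_smul]
        ring
      rw [hrw]
      by_cases hsat : H.Adj a b
      · have hz : h0 a - σ a b * h0 b = 0 := by rw [hpar a b hsat]; ring
        rw [hz, mul_zero, add_zero, (hHadj a b hsat).2]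
      · have h1 : ‖f a - σ a b * f b‖ ≤ δ := by
          have hle := Finset.le_sup' φ (Finset.mem_univ (a, b))
          simp only [hφ] at hle
          rw [if_pos ⟨hab, hsat⟩] at hle
          exact hle
        have h2 : ‖(t : ℂ) * (ε : ℂ) * (h0 a - σ a b * h0 b)‖ ≤ 2 * ε := by
          rw [norm_mul, norm_mul]
          have e1 : ‖(t : ℂ)‖ ≤ 1 := by rwa [Complex.norm_real, Real.norm_eq_abs]
          have e2 : ‖(ε : ℂ)‖ = ε := by
            rw [Complex.norm_real, Real.norm_eq_abs]; exact _root_.abs_of_pos hεpos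
          have e3 : ‖h0 a - σ a b * h0 b‖ ≤ 2 := by
            calc ‖h0 a - σ a b * h0 b‖
                ≤ ‖h0 a‖ + ‖σ a b * h0 b‖ :=
                  norm_sub_le _ _
              _ = ‖h0 a‖ + ‖σ a b‖ * ‖h0 b‖ := by
                  rw [norm_mul]
              _ ≤ 2 := by
                  rw [(hσ a b hab).1, one_mul]
                  linarith [habs0 a, habs0 b]
          calc ‖(t : ℂ)‖ * ‖(ε : ℂ)‖ *
                ‖h0 a - σ a b * h0 b‖
              = |t| * ε * ‖h0 a - σ a b * h0 b‖ := by
                rw [Complex.norm_real, Real.norm_eq_abs, e2]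
            _ ≤ 1 * ε * 2 :=
                mul_le_mul
                  (mul_le_mul habs_t le_rfl (le_of_lt hεpos) zero_le_one)
                  e3 (norm_nonneg _) (by positivity)
            _ = 2 * ε := by ring
        calc ‖(f a - σ a b * f b)
              + ((t : ℂ) * (ε : ℂ)) * (h0 a - σ a b * h0 b)‖
            ≤ ‖f a - σ a b * f b‖
              + ‖((t : ℂ) * (ε : ℂ)) * (h0 a - σ a b * h0 b)‖ :=
              norm_add_le _ _
          _ ≤ δ + 2 * ε := add_le_add h1 h2
          _ = 1 := by rw [hε]; ring
    -- contradiction: g u ≠ 0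
    have hgu : g u = 0 := congrFun hgz u
    have hu0 : h0 u ≠ 0 := by
      simp only [hh0]
      rw [dif_pos (Reachable.refl u)]
      intro hcontra
      have h4 := congrArg (fun z : ℂ => ‖z‖) hcontra
      rw [Complex.norm_conj, abs_sigProd habsH] at h4
      simp at h4
    simp only [hg] at hgu
    rcases mul_eq_zero.mp hgu with h5 | h5
    · rw [Complex.ofReal_eq_zero] at h5
      exact absurd h5 (ne_of_gt hεpos)
    · exact hu0 h5
  · -- all components unbalanced → extreme point
    intro hall
    refine ⟨hf, ?_⟩
    intro g hg
    have hpar : ∀ a b, H.Adj a b → g a = σ a b * g b := by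
      intro a b hab
      obtain ⟨hGab, h1⟩ := hHadj a b hab
      have hp1 : lipNorm G σ (f + (1 : ℝ) • g) ≤ 1 :=
        hg 1 (Set.mem_Icc.mpr ⟨by norm_num, le_refl 1⟩)
      have hm1 : lipNorm G σ (f + (-1 : ℝ) • g) ≤ 1 :=
        hg (-1) (Set.mem_Icc.mpr ⟨le_refl _, by norm_num⟩)
      have e1 : ‖(f a - σ a b * f b) + (g a - σ a b * g b)‖ ≤ 1 := by
        have h := le_trans (edge_le_lipNorm (f + (1 : ℝ) • g) hGab) hp1
        have hrw : (f + (1 : ℝ) • g) a - σ a b * (f + (1 : ℝ) • g) b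
            = (f a - σ a b * f b) + (g a - σ a b * g b) := by
          simp only [Pi.add_apply, Pi.smul_apply, Complex.real_smul]
          push_cast
          ring
        rwa [hrw] at h
      have e2 : ‖(f a - σ a b * f b) - (g a - σ a b * g b)‖ ≤ 1 := by
        have h := le_trans (edge_le_lipNorm (f + (-1 : ℝ) • g) hGab) hm1
        have hrw : (f + (-1 : ℝ) • g) a - σ a b * (f + (-1 : ℝ) • g) b
            = (f a - σ a b * f b) - (g a - σ a b * g b) := by
          simp only [Pi.add_apply, Pi.smul_apply, Complex.real_smul]
          push_cast
          ring
        rwa [hrw] at h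
      have hpl := parallelogram_law_with_norm ℝ (f a - σ a b * f b) (g a - σ a b * g b)
      rw [h1] at hpl
      have hB2 : ‖g a - σ a b * g b‖ ≤ 0 := by
        nlinarith [mul_self_le_mul_self
            (norm_nonneg ((f a - σ a b * f b) + (g a - σ a b * g b))) e1,
          mul_self_le_mul_self
            (norm_nonneg ((f a - σ a b * f b) - (g a - σ a b * g b))) e2]
      have hz : g a - σ a b * g b = 0 := by
        have h0' := le_antisymm hB2 (norm_nonneg _)
        rwa [norm_eq_zero] at h0'
      linear_combination hz
    funext v
    obtain ⟨x, w, hreach, hcyc, hne'⟩ := hall v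
    have hx : g x = 0 := by
      have hgx := parallel_walk hpar w
      have hmul : (1 - sigProd σ w) * g x = 0 := by linear_combination hgx
      rcases mul_eq_zero.mp hmul with h' | h'
      · exact absurd (by linear_combination -h') hne'
      · exact h'
    obtain ⟨p⟩ := hreach
    show g v = 0
    rw [parallel_walk hpar p, hx, mul_zero]

end MagneticGraph
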